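/- Let u ∈ ℂ satisfy u² + u + 1 = 0. There exists a group homomorphism ρ from the presented group ⟨a, b | a b⁻¹ a⁻¹ b a · (b a b⁻¹ a⁻¹ b)⁻¹⟩ (the figure-eight knot group) to SL(2,ℂ) with ρ(a) = [[1,1],[0,1]] and ρ(b) = [[1,0],[-u,1]]. -/

import Mathlib

open FreeGroup in
theorem figure_eight_group_rep_exists (u : ℂ) (hu : u ^ 2 + u + 1 = 0) :
    ∃ ρ : PresentedGroup
        ({of 0 * (of 1)⁻¹ * (of 0)⁻¹ * of 1 * of 0 *
          (of 1 * of 0 * (of 1)⁻¹ * (of 0)⁻¹ * of 1)⁻¹} : Set (FreeGroup (Fin 2))) →*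
        Matrix.SpecialLinearGroup (Fin 2) ℂ,
      ((ρ (PresentedGroup.of 0) : Matrix (Fin 2) (Fin 2) ℂ) = !![1, 1; 0, 1]) ∧
      ((ρ (PresentedGroup.of 1) : Matrix (Fin 2) (Fin 2) ℂ) = !![1, 0; -u, 1]) := by
  have detA : Matrix.det !![(1:ℂ), 1; 0, 1] = 1 := by simp [Matrix.det_fin_two_of]
  have detB : Matrix.det !![(1:ℂ), 0; -u, 1] = 1 := by simp [Matrix.det_fin_two_of]
  set A : Matrix.SpecialLinearGroup (Fin 2) ℂ := ⟨_, detA⟩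
  set B : Matrix.SpecialLinearGroup (Fin 2) ℂ := ⟨_, detB⟩
  set f : Fin 2 → Matrix.SpecialLinearGroup (Fin 2) ℂ := ![A, B] with hf
  have hrel : ∀ r ∈ ({of 0 * (of 1)⁻¹ * (of 0)⁻¹ * of 1 * of 0 *
          (of 1 * of 0 * (of 1)⁻¹ * (of 0)⁻¹ * of 1)⁻¹} : Set (FreeGroup (Fin 2))),
      FreeGroup.lift f r = 1 := by
    intro r hr
    simp only [Set.mem_singleton_iff] at hr
    subst hr
    have h1 : A * B⁻¹ * A⁻¹ * B * A = B * A * B⁻¹ * A⁻¹ * B := by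
      ext i j
      simp only [Matrix.SpecialLinearGroup.coe_mul,
        Matrix.SpecialLinearGroup.coe_inv]
      simp only [A, B]
      rw [Matrix.adjugate_fin_two]
      fin_cases i <;> fin_cases j <;>
        simp [Matrix.mul_apply, Fin.sum_univ_succ] <;>
        (first | ring1 | linear_combination hu | linear_combination u * hu)
    have h2 : A * B⁻¹ * A⁻¹ * B * A * (B * A * B⁻¹ * A⁻¹ * B)⁻¹ = 1 := by
      rw [mul_inv_eq_one]; exact h1
    rw [hf]
    simp only [MonoidHom.map_mul, MonoidHom.map_inv, FreeGroup.lift_apply_of,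
      Matrix.cons_val_zero, Matrix.cons_val_one, Matrix.head_cons]
    rw [← h2]
  exact ⟨PresentedGroup.toGroup hrel, by simp [PresentedGroup.toGroup.of, f, A],
    by simp [PresentedGroup.toGroup.of, f, B]⟩
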